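/- arXiv:1712.06806 — 7 statements merged into one kernel-verified Lean document; each statement's English description precedes it below -/
import Mathlib

section
/- Let p be a nonzero complex number. The λ-bracket [L_i λ L_j] = ((i+p)∂ + (i+j+2p)λ) L_{i+j} on the free ℂ[∂]-module with basis {L_i : i ∈ ℤ≥0} satisfies the Jacobi identity [L_i λ [L_j μ L_k]] = [[L_i λ L_j] {λ+μ} L_k] + [L_j μ [L_i λ L_k]], where the equality is checked in ℂ[∂,λ,μ] ⊗ (⊕ ℂ[∂]L_m). -/
open MvPolynomial

/-- Elements of `ℂ[∂,λ,μ] ⊗ B(p)` written on the `ℂ[∂]`-basis `{L_i}`: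
a family of polynomials in `∂ = X 0`, `λ = X 1`, `μ = X 2`. -/
abbrev BlockElt3 := ℕ →₀ MvPolynomial (Fin 3) ℂ

/-- `[L_i λ L_j] = ((i+p)∂ + (i+j+2p)λ) L_{i+j}`, where the variables `∂` and `lam`
are specified explicitly (so that the same formula can be used with `λ`, `μ`,
`λ+μ` as spectral parameter, and with a shifted or substituted `∂`). -/
noncomputable def blockBracket3 (p : ℂ) (i j : ℕ) (d lam : MvPolynomial (Fin 3) ℂ) :
    BlockElt3 :=
  Finsupp.single (i + j)
    (C ((i : ℂ) + p) * d + C ((i : ℂ) + (j : ℂ) + 2 * p) * lam)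

set_option maxHeartbeats 1000000 in
/-- The Jacobi identity for the λ-bracket of the Block-type Lie conformal
algebra `B(p)`, checked in `ℂ[∂,λ,μ] ⊗ B(p)`:
`[L_i λ [L_j μ L_k]] = [[L_i λ L_j] {λ+μ} L_k] + [L_j μ [L_i λ L_k]]`.
By sesquilinearity, `[L_i λ (Q(∂) L_s)] = Q(∂+λ) [L_i λ L_s]` and
`[(Q(∂,λ) L_s) {λ+μ} L_k] = Q(-(λ+μ),λ) [L_s {λ+μ} L_k]`. -/
theorem blockBracket_jacobi (p : ℂ) (hp : p ≠ 0) (i j k : ℕ) :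
    ((blockBracket3 p j k (X 0) (X 2)).sum fun s Q =>
        ((aeval ![X 0 + X 1, X 1, X 2] Q : MvPolynomial (Fin 3) ℂ)) • blockBracket3 p i s (X 0) (X 1))
    = ((blockBracket3 p i j (X 0) (X 1)).sum fun s Q =>
        ((aeval ![-(X 1 + X 2), X 1, X 2] Q : MvPolynomial (Fin 3) ℂ)) • blockBracket3 p s k (X 0) (X 1 + X 2))
      + ((blockBracket3 p i k (X 0) (X 1)).sum fun s Q =>
        ((aeval ![X 0 + X 2, X 1, X 2] Q : MvPolynomial (Fin 3) ℂ)) • blockBracket3 p j s (X 0) (X 2)) := by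
  unfold blockBracket3
  rw [Finsupp.sum_single_index (by simp), Finsupp.sum_single_index (by simp),
    Finsupp.sum_single_index (by simp)]
  simp only [map_add, map_mul, aeval_C, aeval_X, Matrix.cons_val_zero, Matrix.cons_val_one,
    Matrix.head_cons, Matrix.cons_val_two, Matrix.tail_cons, Finsupp.smul_single, smul_eq_mul,
    map_neg]
  rw [show i + (j + k) = i + j + k from by ring, show j + (i + k) = i + j + k from by ring,
    ← Finsupp.single_add]
  congr 1
  simp only [algebraMap_eq, Nat.cast_add, map_add, map_ofNat]
  ring
end

section
/- Let p ∈ ℂ be nonzero. The ℂ-vector space with basis {L_{i,m} : i ∈ ℤ≥0, m ∈ ℤ≥-1} equipped with the bracket [L_{i,m}, L_{j,n}] = ((j+p)(m+1) - (i+p)(n+1)) L_{i+j, m+n} is a Lie algebra (the bracket is alternating and satisfies the Jacobi identity). -/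
/-- The underlying space of the annihilation algebra `A(B(p))`: formal `ℂ`-linear
combinations of the symbols `L_{i,m}` with `i ∈ ℤ≥0`, `m ∈ ℤ` (only those with
`m ≥ -1` are used). -/
abbrev AnnAlg := (ℕ × ℤ) →₀ ℂ

/-- Structure constant: `[L_{i,m}, L_{j,n}] = ((j+p)(m+1) - (i+p)(n+1)) L_{i+j,m+n}`.
When `m = n = -1` this coefficient vanishes, so the result never involves `m+n < -1`. -/
noncomputable def annCoeff (p : ℂ) (a b : ℕ × ℤ) : ℂ :=
  ((b.1 : ℂ) + p) * ((a.2 : ℂ) + 1) - ((a.1 : ℂ) + p) * ((b.2 : ℂ) + 1)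

/-- The bracket on `A(B(p))`, extended bilinearly from the basis. -/
noncomputable def annBracket (p : ℂ) (x y : AnnAlg) : AnnAlg :=
  x.sum fun a ca => y.sum fun b cb =>
    (ca * cb * annCoeff p a b) • Finsupp.single (a.1 + b.1, a.2 + b.2) (1 : ℂ)

/-- An element of `AnnAlg` is supported on the allowed basis `{L_{i,m} : m ≥ -1}`. -/
def AnnSupported (x : AnnAlg) : Prop := ∀ a ∈ x.support, (-1 : ℤ) ≤ a.2

/-!
The bracket is bilinear, so antisymmetry and the Jacobi identity reduce to basis vectors, where
they become polynomial identities between the structure constants `annCoeff`. The span of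
`{L_{i,m} : m ≥ -1}` is closed because `m + n < -1` forces `m = n = -1`, and then the
structure constant vanishes.
-/

open Finsupp

lemma annCoeff_swap (p : ℂ) (a b : ℕ × ℤ) : annCoeff p b a = -annCoeff p a b := by
  simp only [annCoeff]
  ring

lemma annCoeff_jacobi (p : ℂ) (a b c : ℕ × ℤ) :
    annCoeff p b c * annCoeff p a (b + c)
      = annCoeff p a b * annCoeff p (a + b) c + annCoeff p a c * annCoeff p b (a + c) := by
  simp only [annCoeff, Prod.fst_add, Prod.snd_add]
  push_cast
  ring

lemma annCoeff_eq_zero_of_snd_eq_neg_one (p : ℂ) {a b : ℕ × ℤ} (ha : a.2 = -1) (hb : b.2 = -1) :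
    annCoeff p a b = 0 := by
  simp [annCoeff, ha, hb]

@[simp]
lemma annBracket_zero_left (p : ℂ) (y : AnnAlg) : annBracket p 0 y = 0 := by
  simp [annBracket]

@[simp]
lemma annBracket_zero_right (p : ℂ) (x : AnnAlg) : annBracket p x 0 = 0 := by
  simp [annBracket]

lemma annBracket_add_left (p : ℂ) (x x' y : AnnAlg) :
    annBracket p (x + x') y = annBracket p x y + annBracket p x' y := by
  unfold annBracket
  rw [sum_add_index' (fun _ => by simp) fun _ _ _ => by simp only [add_mul, add_smul, sum_add]]

lemma annBracket_add_right (p : ℂ) (x y y' : AnnAlg) :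
    annBracket p x (y + y') = annBracket p x y + annBracket p x y' := by
  unfold annBracket
  rw [← sum_add]
  congr 1
  ext a ca
  rw [sum_add_index' (fun _ => by simp) fun _ _ _ => by simp only [mul_add, add_mul, add_smul]]

lemma annBracket_single_single (p : ℂ) (a b : ℕ × ℤ) (ca cb : ℂ) :
    annBracket p (single a ca) (single b cb) = single (a + b) (ca * cb * annCoeff p a b) := by
  rw [annBracket, sum_single_index (by simp), sum_single_index (by simp), smul_single', mul_one]
  rfl

lemma annBracket_swap (p : ℂ) (x y : AnnAlg) : annBracket p y x = -annBracket p x y := by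
  induction x using Finsupp.induction_linear generalizing y with
  | zero => simp
  | add x x' hx hx' => rw [annBracket_add_left, annBracket_add_right, hx, hx', neg_add]
  | single a ca =>
    induction y using Finsupp.induction_linear with
    | zero => simp
    | add y y' hy hy' => rw [annBracket_add_left, annBracket_add_right, hy, hy', neg_add]
    | single b cb =>
      rw [annBracket_single_single, annBracket_single_single, annCoeff_swap, ← single_neg,
        add_comm b a]
      congr 1
      ring

lemma annBracket_self (p : ℂ) (x : AnnAlg) : annBracket p x x = 0 :=
  self_eq_neg.mp (annBracket_swap p x x)

lemma annBracket_jacobi_single (p : ℂ) (a b c : ℕ × ℤ) (ca cb cc : ℂ) :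
    annBracket p (single a ca) (annBracket p (single b cb) (single c cc))
      = annBracket p (annBracket p (single a ca) (single b cb)) (single c cc)
        + annBracket p (single b cb) (annBracket p (single a ca) (single c cc)) := by
  simp only [annBracket_single_single]
  rw [← add_assoc, add_left_comm b a c, ← add_assoc, ← single_add]
  congr 1
  linear_combination ca * cb * cc * annCoeff_jacobi p a b c

lemma annBracket_jacobi (p : ℂ) (x y z : AnnAlg) :
    annBracket p x (annBracket p y z)
      = annBracket p (annBracket p x y) z + annBracket p y (annBracket p x z) := by
  induction x using Finsupp.induction_linear generalizing y z with
  | zero => simp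
  | add x x' hx hx' => simp only [annBracket_add_left, annBracket_add_right, hx, hx']; abel
  | single a ca =>
    induction y using Finsupp.induction_linear generalizing z with
    | zero => simp
    | add y y' hy hy' => simp only [annBracket_add_left, annBracket_add_right, hy, hy']; abel
    | single b cb =>
      induction z using Finsupp.induction_linear with
      | zero => simp
      | add z z' hz hz' => simp only [annBracket_add_right, hz, hz']; abel
      | single c cc => exact annBracket_jacobi_single p a b c ca cb cc

lemma AnnSupported.annBracket (p : ℂ) {x y : AnnAlg} (hx : AnnSupported x)
    (hy : AnnSupported y) : AnnSupported (annBracket p x y) := by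
  intro k hk
  obtain ⟨a, ha, hka⟩ := Finset.mem_biUnion.mp (support_sum hk)
  obtain ⟨b, hb, hkab⟩ := Finset.mem_biUnion.mp (support_sum hka)
  obtain rfl : k = (a.1 + b.1, a.2 + b.2) :=
    Finset.mem_singleton.mp (support_single_subset (support_smul hkab))
  by_contra hlt
  have hcoeff : annCoeff p a b = 0 :=
    annCoeff_eq_zero_of_snd_eq_neg_one p (by linarith [hx a ha, hy b hb])
      (by linarith [hx a ha, hy b hb])
  simp [hcoeff] at hkab

theorem annihilation_is_lie_algebra_general (p : ℂ) :
    (∀ x y : AnnAlg, AnnSupported x → AnnSupported y → AnnSupported (annBracket p x y)) ∧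
    (∀ x : AnnAlg, AnnSupported x → annBracket p x x = 0) ∧
    (∀ x y z : AnnAlg, AnnSupported x → AnnSupported y → AnnSupported z →
      annBracket p x (annBracket p y z)
        = annBracket p (annBracket p x y) z + annBracket p y (annBracket p x z)) :=
  ⟨fun _ _ hx hy => hx.annBracket p hy, fun x _ => annBracket_self p x,
    fun x y z _ _ _ => annBracket_jacobi p x y z⟩

/-- The bracket `[L_{i,m}, L_{j,n}] = ((j+p)(m+1) - (i+p)(n+1)) L_{i+j,m+n}` on the span
of `{L_{i,m} : i ≥ 0, m ≥ -1}` makes it a Lie algebra: the bracket is bilinear by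
construction, preserves the span, is alternating, and satisfies the Jacobi identity. -/
theorem annihilation_is_lie_algebra (p : ℂ) (hp : p ≠ 0) :
    (∀ x y : AnnAlg, AnnSupported x → AnnSupported y → AnnSupported (annBracket p x y)) ∧
    (∀ x : AnnAlg, AnnSupported x → annBracket p x x = 0) ∧
    (∀ x y z : AnnAlg, AnnSupported x → AnnSupported y → AnnSupported z →
      annBracket p x (annBracket p y z)
        = annBracket p (annBracket p x y) z + annBracket p y (annBracket p x z)) :=
  annihilation_is_lie_algebra_general p
end

section
/- Let f ∈ ℂ[∂,λ] be nonzero and suppose f(∂,λ)·f(∂+λ,μ) = f(∂,μ)·f(∂+μ,λ) as polynomials in ∂, λ, μ. Then f is independent of its first variable ∂, i.e., f ∈ ℂ[λ]. -/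
open MvPolynomial

set_option synthInstance.maxHeartbeats 1000000
set_option maxHeartbeats 1000000

noncomputable section IndepAux

namespace IndepAux

abbrev Rr : Type := MvPolynomial (Fin 2) ℂ
abbrev Kk : Type := FractionRing Rr

def dd : Kk := algebraMap Rr Kk (X 0)
def mm : Kk := algebraMap Rr Kk (X 1)

def ψ (c : Kk) : MvPolynomial (Fin 1) ℂ →ₐ[ℂ] Kk := aeval (fun _ => c)

lemma ψ_injective (r : Rr) (τ : Rr →ₐ[ℂ] MvPolynomial (Fin 1) ℂ) (hτ : τ r = X 0) :
    Function.Injective (ψ (algebraMap Rr Kk r)) := by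
  have key : ψ (algebraMap Rr Kk r)
      = (IsScalarTower.toAlgHom ℂ Rr Kk).comp (aeval (fun _ : Fin 1 => r)) := by
    apply algHom_ext; intro i
    simp [ψ]
  have hcomp : τ.comp (aeval (fun _ : Fin 1 => r)) = AlgHom.id ℂ (MvPolynomial (Fin 1) ℂ) := by
    rw [← aeval_X_left]
    apply algHom_ext; intro i
    have hi : i = 0 := Subsingleton.elim _ _
    simp [hi, hτ]
  have h1 : Function.Injective (aeval (R := ℂ) (fun _ : Fin 1 => r)) := by
    intro a b hab
    have h2 := congrArg τ hab
    rw [← AlgHom.comp_apply, ← AlgHom.comp_apply, hcomp] at h2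
    simpa using h2
  rw [key]
  simpa [AlgHom.coe_comp] using (IsFractionRing.injective Rr Kk).comp h1

lemma ψdd_inj : Function.Injective (ψ dd) :=
  ψ_injective (X 0) (aeval ![X 0, 0]) (by simp)

lemma ψmm_inj : Function.Injective (ψ mm) :=
  ψ_injective (X 1) (aeval ![0, X 0]) (by simp)

lemma ψdm_inj : Function.Injective (ψ (dd + mm)) := by
  have : dd + mm = algebraMap Rr Kk (X 0 + X 1) := by simp [dd, mm]
  rw [this]
  exact ψ_injective (X 0 + X 1) (aeval ![X 0, 0]) (by simp)

def χ : MvPolynomial (Fin 3) ℂ →ₐ[ℂ] Polynomial Kk :=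
  MvPolynomial.aeval ![Polynomial.C dd, Polynomial.X, Polynomial.C mm]

def Φ (c : Kk) : MvPolynomial (Fin 2) ℂ →ₐ[ℂ] Polynomial Kk :=
  ((Polynomial.mapAlgHom (ψ c)).comp (finSuccEquiv ℂ 1).toAlgHom).comp
    (rename (Equiv.swap (0 : Fin 2) 1))

def Φ' (c : Kk) : MvPolynomial (Fin 2) ℂ →ₐ[ℂ] Polynomial Kk :=
  (Polynomial.mapAlgHom (ψ c)).comp (finSuccEquiv ℂ 1).toAlgHom

lemma X1_eq : (X (1 : Fin 2) : MvPolynomial (Fin 2) ℂ) = X (Fin.succ 0) := rfl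

lemma id1 : χ.comp (MvPolynomial.aeval ![X 0, X 1]) = Φ dd := by
  apply algHom_ext; intro i
  fin_cases i <;>
    simp [χ, Φ, ψ, X1_eq, finSuccEquiv_X_zero, finSuccEquiv_X_succ, Equiv.swap_apply_left,
      Equiv.swap_apply_right]

lemma idD : χ.comp (MvPolynomial.aeval ![X 0 + X 2, X 1]) = Φ (dd + mm) := by
  apply algHom_ext; intro i
  fin_cases i <;>
    simp [χ, Φ, ψ, X1_eq, finSuccEquiv_X_zero, finSuccEquiv_X_succ, Equiv.swap_apply_left,
      Equiv.swap_apply_right]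

lemma idC : χ.comp (MvPolynomial.aeval ![X 0, X 2])
    = (Polynomial.CAlgHom).comp (IsScalarTower.toAlgHom ℂ Rr Kk) := by
  apply algHom_ext; intro i
  fin_cases i <;> simp [χ, dd, mm]

lemma idB : χ.comp (MvPolynomial.aeval ![X 0 + X 1, X 2])
    = ((Polynomial.aeval (Polynomial.X + Polynomial.C dd)).restrictScalars ℂ).comp (Φ' mm) := by
  apply algHom_ext; intro i
  fin_cases i <;>
    simp [χ, Φ', ψ, X1_eq, finSuccEquiv_X_zero, finSuccEquiv_X_succ, add_comm]

lemma Φ_apply (c : Kk) (p : MvPolynomial (Fin 2) ℂ) :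
    Φ c p = Polynomial.map (ψ c).toRingHom
      (finSuccEquiv ℂ 1 (rename (Equiv.swap (0 : Fin 2) 1) p)) := rfl

lemma Φ'_apply (c : Kk) (p : MvPolynomial (Fin 2) ℂ) :
    Φ' c p = Polynomial.map (ψ c).toRingHom (finSuccEquiv ℂ 1 p) := rfl

lemma final (a : MvPolynomial (Fin 1) ℂ) :
    (finSuccEquiv ℂ 1).symm (Polynomial.C a)
      = Polynomial.aeval (R := ℂ) (X 1 : MvPolynomial (Fin 2) ℂ)
          (MvPolynomial.aeval (fun _ : Fin 1 => Polynomial.X) a) := by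
  have h2 : (finSuccEquiv ℂ 1).symm (Polynomial.C (X (0 : Fin 1))) = X (Fin.succ (0 : Fin 1)) := by
    rw [← finSuccEquiv_X_succ, AlgEquiv.symm_apply_apply]
  have key : ((finSuccEquiv ℂ 1).symm.toAlgHom.comp Polynomial.CAlgHom :
        MvPolynomial (Fin 1) ℂ →ₐ[ℂ] MvPolynomial (Fin 2) ℂ)
      = (Polynomial.aeval (X 1 : MvPolynomial (Fin 2) ℂ)).comp
          (MvPolynomial.aeval fun _ : Fin 1 => Polynomial.X) := by
    apply algHom_ext; intro i
    have hi : i = 0 := Subsingleton.elim _ _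
    subst hi
    simp [h2]
  exact AlgHom.congr_fun key a

end IndepAux

end IndepAux

open IndepAux in
/-- If a nonzero `f ∈ ℂ[∂,λ]` (with `∂ = X 0`, `λ = X 1`) satisfies
`f(∂,λ)·f(∂+λ,μ) = f(∂,μ)·f(∂+μ,λ)` in `ℂ[∂,λ,μ]` (variables `∂ = X 0`, `λ = X 1`,
`μ = X 2`), then `f` is independent of `∂`, i.e. `f = g(λ)` for some `g ∈ ℂ[λ]`. -/
theorem indep_of_first_variable (f : MvPolynomial (Fin 2) ℂ) (hf : f ≠ 0)
    (h : (aeval ![(X 0 : MvPolynomial (Fin 3) ℂ), X 1] f) * (aeval ![X 0 + X 1, X 2] f)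
        = (aeval ![(X 0 : MvPolynomial (Fin 3) ℂ), X 2] f) * (aeval ![X 0 + X 2, X 1] f)) :
    ∃ g : Polynomial ℂ, f = Polynomial.aeval (X 1 : MvPolynomial (Fin 2) ℂ) g := by
  classical
  set Q : Polynomial (MvPolynomial (Fin 1) ℂ) := finSuccEquiv ℂ 1 f with hQdef
  set Q' : Polynomial (MvPolynomial (Fin 1) ℂ) :=
    finSuccEquiv ℂ 1 (rename (Equiv.swap (0 : Fin 2) 1) f) with hQ'def
  have hQ : Q ≠ 0 :=
    (map_ne_zero_iff (finSuccEquiv ℂ 1) (AlgEquiv.injective _)).mpr hf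
  have hswap : rename (Equiv.swap (0 : Fin 2) 1) f ≠ 0 :=
    (map_ne_zero_iff (rename (R := ℂ) (Equiv.swap (0 : Fin 2) 1))
      (rename_injective _ (Equiv.injective _))).mpr hf
  have hQ' : Q' ≠ 0 :=
    (map_ne_zero_iff (finSuccEquiv ℂ 1) (AlgEquiv.injective _)).mpr hswap
  have H := congrArg (⇑χ) h
  rw [map_mul, map_mul] at H
  have e1 : χ (aeval ![(X 0 : MvPolynomial (Fin 3) ℂ), X 1] f)
      = Q'.map (ψ dd).toRingHom := by
    simpa [Φ_apply] using AlgHom.congr_fun id1 f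
  have e4 : χ (aeval ![(X 0 : MvPolynomial (Fin 3) ℂ) + X 2, X 1] f)
      = Q'.map (ψ (dd + mm)).toRingHom := by
    simpa [Φ_apply] using AlgHom.congr_fun idD f
  have e3 : χ (aeval ![(X 0 : MvPolynomial (Fin 3) ℂ), X 2] f)
      = Polynomial.C (algebraMap Rr Kk f) := by
    simpa using AlgHom.congr_fun idC f
  have e2 : χ (aeval ![(X 0 : MvPolynomial (Fin 3) ℂ) + X 1, X 2] f)
      = (Q.map (ψ mm).toRingHom).comp (Polynomial.X + Polynomial.C dd) := by
    have h5 := AlgHom.congr_fun idB f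
    simp only [AlgHom.comp_apply, AlgHom.coe_restrictScalars', Φ'_apply] at h5
    rw [h5, ← Polynomial.comp_eq_aeval]
  rw [e1, e2, e3, e4] at H
  -- nonzeroness of factors
  have hA : Q'.map (ψ dd).toRingHom ≠ 0 :=
    (Polynomial.map_ne_zero_iff ψdd_inj).mpr hQ'
  have hD : Q'.map (ψ (dd + mm)).toRingHom ≠ 0 :=
    (Polynomial.map_ne_zero_iff ψdm_inj).mpr hQ'
  have hC : (Polynomial.C (algebraMap Rr Kk f) : Polynomial Kk) ≠ 0 :=
    Polynomial.C_ne_zero.mpr ((map_ne_zero_iff _ (IsFractionRing.injective Rr Kk)).mpr hf)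
  have hB : (Q.map (ψ mm).toRingHom).comp (Polynomial.X + Polynomial.C dd) ≠ 0 := by
    intro h0
    rw [h0, mul_zero] at H
    exact (mul_ne_zero hC hD) H.symm
  -- degree count
  have hdeg := congrArg Polynomial.natDegree H
  rw [Polynomial.natDegree_mul hA hB, Polynomial.natDegree_mul hC hD,
    Polynomial.natDegree_C, zero_add,
    Polynomial.natDegree_map_eq_of_injective ψdd_inj,
    Polynomial.natDegree_map_eq_of_injective ψdm_inj] at hdeg
  have hB0 : ((Q.map (ψ mm).toRingHom).comp (Polynomial.X + Polynomial.C dd)).natDegree = 0 := by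
    omega
  rw [Polynomial.natDegree_comp, Polynomial.natDegree_X_add_C, mul_one,
    Polynomial.natDegree_map_eq_of_injective ψmm_inj] at hB0
  -- hence Q is a constant
  obtain ⟨a, ha⟩ := Polynomial.natDegree_eq_zero.mp hB0
  refine ⟨MvPolynomial.aeval (fun _ : Fin 1 => Polynomial.X) a, ?_⟩
  have hfa : f = (finSuccEquiv ℂ 1).symm (Polynomial.C a) := by
    rw [ha, hQdef, AlgEquiv.symm_apply_apply]
  rw [hfa, final]
end

section
/- Let p ∈ ℂ, k a positive integer with k + p ≠ 0, and f ∈ ℂ[λ] satisfying (pμ - (k+p)λ)·f(λ+μ) = pμ·f(μ) for all λ, μ. Then f = 0. -/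
namespace Polynomial

theorem eq_zero_of_eval_eq_zero_of_ne {R : Type*} [CommRing R] [IsDomain R] [Infinite R]
    (f : R[X]) (a : R) (hf : ∀ x ≠ a, f.eval x = 0) : f = 0 :=
  eq_zero_of_infinite_isRoot f <|
    (Set.finite_singleton a).infinite_compl.mono fun x hx => hf x hx

end Polynomial

theorem f_eq_zero_general (p : ℂ) (k : ℕ) (hkp : (k : ℂ) + p ≠ 0)
    (f : Polynomial ℂ)
    (h : ∀ lam mu : ℂ, (p * mu - ((k : ℂ) + p) * lam) * f.eval (lam + mu)
        = p * mu * f.eval mu) :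
    f = 0 := by
  refine f.eq_zero_of_eval_eq_zero_of_ne 0 fun lam hlam => ?_
  -- At `mu = 0` the identity reads `-(k + p) * lam * f(lam) = 0`.
  have h0 := h lam 0
  simp only [mul_zero, zero_sub, add_zero, zero_mul, neg_mul, neg_eq_zero, mul_eq_zero] at h0
  tauto

/-- Let `p ∈ ℂ`, `k ≥ 1` an integer with `k + p ≠ 0`, and `f ∈ ℂ[λ]` with
`(pμ - (k+p)λ)·f(λ+μ) = pμ·f(μ)` for all `λ, μ`.  Then `f = 0`. -/
theorem f_eq_zero (p : ℂ) (k : ℕ) (hk : 1 ≤ k) (hkp : (k : ℂ) + p ≠ 0)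
    (f : Polynomial ℂ)
    (h : ∀ lam mu : ℂ, (p * mu - ((k : ℂ) + p) * lam) * f.eval (lam + mu)
        = p * mu * f.eval mu) :
    f = 0 :=
  f_eq_zero_general p k hkp f h
end

section
/- Let p ∈ ℂ be nonzero with p ∉ ℚ>0, and let k, N ≥ 0 be integers. Define the finite-dimensional Lie algebra G_{k,N} with basis {J_{i,m} : 0 ≤ i ≤ k, 0 ≤ m ≤ N} and bracket [J_{i,m}, J_{j,n}] = ((j+p)(m+1)-(i+p)(n+1)) J_{i+j,m+n} when i+j ≤ k and m+n ≤ N, and 0 otherwise. Then the span K of all J_{i,m} with (i,m) ≠ (0,0) is a nilpotent ideal of G_{k,N}, and [J_{0,0}, J_{i,m}] = (i - pm)J_{i,m} with i - pm ≠ 0 for every (i,m) ≠ (0,0) in the index range. -/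
/-- The underlying space of `G_{k,N}`: formal `ℂ`-linear combinations of symbols
`J_{i,m}` with `i, m ∈ ℕ` (only `i ≤ k`, `m ≤ N` are used). -/
abbrev GSpace := (ℕ × ℕ) →₀ ℂ

/-- The bracket of basis elements of `G_{k,N}`:
`[J_{i,m}, J_{j,n}] = ((j+p)(m+1) - (i+p)(n+1)) J_{i+j,m+n}` if `i+j ≤ k` and
`m+n ≤ N`, and `0` otherwise. -/
noncomputable def gSingleBracket (p : ℂ) (k N : ℕ) (a b : ℕ × ℕ) : GSpace :=
  if a.1 + b.1 ≤ k ∧ a.2 + b.2 ≤ N then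
    (((b.1 : ℂ) + p) * ((a.2 : ℂ) + 1) - ((a.1 : ℂ) + p) * ((b.2 : ℂ) + 1)) •
      Finsupp.single (a.1 + b.1, a.2 + b.2) (1 : ℂ)
  else 0

/-- The bracket of `G_{k,N}`, extended bilinearly. -/
noncomputable def gBracket (p : ℂ) (k N : ℕ) (x y : GSpace) : GSpace :=
  x.sum fun a ca => y.sum fun b cb => (ca * cb) • gSingleBracket p k N a b

/-- The subspace `K`: the span of the `J_{i,m}` with `0 ≤ i ≤ k`, `0 ≤ m ≤ N` and
`(i,m) ≠ (0,0)`. -/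
noncomputable def Ksub (k N : ℕ) : Submodule ℂ GSpace :=
  Submodule.span ℂ
    {x | ∃ a : ℕ × ℕ, a.1 ≤ k ∧ a.2 ≤ N ∧ a ≠ (0, 0) ∧ x = Finsupp.single a (1 : ℂ)}

/-- Left-nested iterated brackets `[...[[f 0, f 1], f 2]..., f r]`. -/
noncomputable def nestedBracket (p : ℂ) (k N : ℕ) (f : ℕ → GSpace) : ℕ → GSpace
  | 0 => f 0
  | r + 1 => gBracket p k N (nestedBracket p k N f r) (f (r + 1))

lemma gBracket_zero_right (p : ℂ) (k N : ℕ) (x : GSpace) : gBracket p k N x 0 = 0 := by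
  simp [gBracket]

lemma gBracket_add_right (p : ℂ) (k N : ℕ) (x y z : GSpace) :
    gBracket p k N x (y + z) = gBracket p k N x y + gBracket p k N x z := by
  unfold gBracket
  rw [← Finsupp.sum_add]
  refine Finsupp.sum_congr fun a _ => ?_
  rw [Finsupp.sum_add_index' (fun b => by simp) (fun b c1 c2 => by rw [mul_add, add_smul])]

lemma gBracket_smul_right (p : ℂ) (k N : ℕ) (c : ℂ) (x y : GSpace) :
    gBracket p k N x (c • y) = c • gBracket p k N x y := by
  unfold gBracket
  rw [Finsupp.smul_sum]
  refine Finsupp.sum_congr fun a _ => ?_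
  rw [Finsupp.sum_smul_index' (fun b => by simp), Finsupp.smul_sum]
  refine Finsupp.sum_congr fun b _ => ?_
  rw [smul_eq_mul, smul_smul]
  ring_nf

lemma gBracket_single_single (p : ℂ) (k N : ℕ) (a b : ℕ × ℕ) :
    gBracket p k N (Finsupp.single a 1) (Finsupp.single b 1) = gSingleBracket p k N a b := by
  unfold gBracket
  rw [Finsupp.sum_single_index (by simp), Finsupp.sum_single_index (by simp)]
  simp

lemma support_gBracket (p : ℂ) (k N : ℕ) (x y : GSpace) (c : ℕ × ℕ)
    (hc : c ∈ (gBracket p k N x y).support) :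
    ∃ a ∈ x.support, ∃ b ∈ y.support,
      c = (a.1 + b.1, a.2 + b.2) ∧ a.1 + b.1 ≤ k ∧ a.2 + b.2 ≤ N := by
  have h1 := Finsupp.support_sum hc
  rw [Finset.mem_biUnion] at h1
  obtain ⟨a, ha, hc1⟩ := h1
  have h2 := Finsupp.support_sum hc1
  rw [Finset.mem_biUnion] at h2
  obtain ⟨b, hb, hc2⟩ := h2
  refine ⟨a, ha, b, hb, ?_⟩
  have h3 := Finsupp.support_smul hc2
  unfold gSingleBracket at h3
  split_ifs at h3 with h
  · have h4 := Finsupp.support_smul h3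
    rw [Finsupp.support_single_ne_zero _ one_ne_zero, Finset.mem_singleton] at h4
    exact ⟨h4, h.1, h.2⟩
  · simp at h3

lemma Ksub_support (k N : ℕ) (x : GSpace) (hx : x ∈ Ksub k N) :
    ∀ c ∈ x.support, 1 ≤ c.1 + c.2 := by
  induction hx using Submodule.span_induction with
  | mem x hx =>
    obtain ⟨a, _, _, ha0, rfl⟩ := hx
    intro c hc
    rw [Finsupp.support_single_ne_zero _ one_ne_zero, Finset.mem_singleton] at hc
    subst hc
    rcases Nat.eq_zero_or_pos (c.1 + c.2) with h | h
    · exact absurd (Prod.ext (Nat.le_zero.mp (le_of_add_le_left h.le)) (Nat.le_zero.mp (le_of_add_le_right h.le))) ha0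
    · exact h
  | zero => simp
  | add x y _ _ hx hy =>
    intro c hc
    rcases Finset.mem_union.mp (Finsupp.support_add hc) with h | h
    · exact hx c h
    · exact hy c h
  | smul c x _ hx =>
    intro d hd
    exact hx d (Finsupp.support_smul hd)

lemma nested_deg (p : ℂ) (k N : ℕ) (f : ℕ → GSpace) (hf : ∀ t, f t ∈ Ksub k N) :
    ∀ r, ∀ c ∈ (nestedBracket p k N f r).support, r + 1 ≤ c.1 + c.2 := by
  intro r
  induction r with
  | zero => exact Ksub_support k N (f 0) (hf 0)
  | succ r ih =>
    intro c hc
    obtain ⟨a, ha, b, hb, hcab, _, _⟩ := support_gBracket p k N _ _ c hc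
    have h1 := ih a ha
    have h2 := Ksub_support k N (f (r + 1)) (hf (r + 1)) b hb
    subst hcab
    simp only
    omega

/-- For `p ≠ 0` with `p ∉ ℚ>0`: in `G_{k,N}`, the span `K` of the `J_{i,m}` with
`(i,m) ≠ (0,0)` is a nilpotent ideal (brackets with basis elements of `G_{k,N}` land in
`K`, and all sufficiently long nested brackets of elements of `K` vanish), and
`[J_{0,0}, J_{i,m}] = (i - pm) J_{i,m}` with `i - pm ≠ 0` for every `(i,m) ≠ (0,0)`
in the index range. -/
theorem K_nilpotent_ideal (p : ℂ) (hp : p ≠ 0) (hpq : ∀ q : ℚ, 0 < q → (q : ℂ) ≠ p)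
    (k N : ℕ) :
    (∀ a : ℕ × ℕ, a.1 ≤ k → a.2 ≤ N → ∀ y ∈ Ksub k N,
      gBracket p k N (Finsupp.single a 1) y ∈ Ksub k N) ∧
    (∃ r : ℕ, ∀ f : ℕ → GSpace, (∀ t, f t ∈ Ksub k N) → nestedBracket p k N f r = 0) ∧
    (∀ i m : ℕ, i ≤ k → m ≤ N → (i, m) ≠ (0, 0) →
      gBracket p k N (Finsupp.single (0, 0) 1) (Finsupp.single (i, m) 1)
          = ((i : ℂ) - p * (m : ℂ)) • Finsupp.single (i, m) (1 : ℂ) ∧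
        (i : ℂ) - p * (m : ℂ) ≠ 0) := by
  refine ⟨?_, ?_, ?_⟩
  · intro a _ _ y hy
    induction hy using Submodule.span_induction with
    | mem y hy =>
      obtain ⟨b, hb1, hb2, hb0, rfl⟩ := hy
      rw [gBracket_single_single]
      unfold gSingleBracket
      split_ifs with h
      · refine Submodule.smul_mem _ _ (Submodule.subset_span ?_)
        refine ⟨(a.1 + b.1, a.2 + b.2), h.1, h.2, ?_, rfl⟩
        intro hcontra
        apply hb0
        have h1 : a.1 + b.1 = 0 := congrArg Prod.fst hcontra
        have h2 : a.2 + b.2 = 0 := congrArg Prod.snd hcontra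
        exact Prod.ext (by omega) (by omega)
      · exact Submodule.zero_mem _
    | zero => rw [gBracket_zero_right]; exact Submodule.zero_mem _
    | add x y _ _ hx hy => rw [gBracket_add_right]; exact Submodule.add_mem _ hx hy
    | smul c x _ hx => rw [gBracket_smul_right]; exact Submodule.smul_mem _ _ hx
  · refine ⟨k + N + 1, fun f hf => ?_⟩
    rw [← Finsupp.support_eq_empty]
    refine Finset.eq_empty_of_forall_notMem fun c hc => ?_
    have hdeg := nested_deg p k N f hf (k + N + 1) c hc
    have : nestedBracket p k N f (k + N + 1)
        = gBracket p k N (nestedBracket p k N f (k + N)) (f (k + N + 1)) := rfl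
    rw [this] at hc
    obtain ⟨a, _, b, _, hcab, h1, h2⟩ := support_gBracket p k N _ _ c hc
    subst hcab
    simp only at hdeg
    omega
  · intro i m hi hm him
    constructor
    · rw [gBracket_single_single]
      unfold gSingleBracket
      rw [if_pos (by simpa using ⟨hi, hm⟩)]
      simp only [Nat.cast_zero, zero_add]
      congr 1
      ring
    · intro h
      rcases Nat.eq_zero_or_pos m with hm0 | hm0
      · subst hm0
        simp at h
        exact him (by simp [Nat.cast_eq_zero.mp h])
      · rcases Nat.eq_zero_or_pos i with hi0 | hi0
        · subst hi0
          simp at h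
          rcases h with h | h
          · exact hp h
          · exact hm0.ne' (by exact_mod_cast h)
        · have hq : (0 : ℚ) < (i : ℚ) / (m : ℚ) :=
            div_pos (by exact_mod_cast hi0) (by exact_mod_cast hm0)
          apply hpq _ hq
          have hmne : ((m : ℂ)) ≠ 0 := Nat.cast_ne_zero.mpr hm0.ne'
          push_cast
          rw [div_eq_iff hmne]
          linear_combination h
end

section
/- Let p ∈ ℂ be nonzero with p ∉ ℚ>0, and let V be a nontrivial finite-dimensional irreducible module over the Lie algebra G_{k,N}. Then dim V = 1. -/
/-- A representation of the Lie algebra `G_{k,N}` on a complex vector space `V`: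
a family `ρ (i,m)` of endomorphisms (for the basis vectors `J_{i,m}`, `0 ≤ i ≤ k`,
`0 ≤ m ≤ N`) satisfying
`[ρ J_{i,m}, ρ J_{j,n}] = ((j+p)(m+1)-(i+p)(n+1)) ρ J_{i+j,m+n}` if `i+j ≤ k`,
`m+n ≤ N`, and `0` otherwise. -/
def IsGRep (p : ℂ) (k N : ℕ) {V : Type*} [AddCommGroup V] [Module ℂ V]
    (ρ : ℕ × ℕ → Module.End ℂ V) : Prop :=
  ∀ a b : ℕ × ℕ, a.1 ≤ k → a.2 ≤ N → b.1 ≤ k → b.2 ≤ N →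
    ρ a * ρ b - ρ b * ρ a =
      if a.1 + b.1 ≤ k ∧ a.2 + b.2 ≤ N then
        (((b.1 : ℂ) + p) * ((a.2 : ℂ) + 1) - ((a.1 : ℂ) + p) * ((b.2 : ℂ) + 1)) •
          ρ (a.1 + b.1, a.2 + b.2)
      else 0

lemma GRep.finrank_eq_zero_of_comm_smul {V : Type*} [AddCommGroup V] [Module ℂ V]
    [FiniteDimensional ℂ V] {A B : Module.End ℂ V} {c : ℂ} (hc : c ≠ 0)
    (h : A * B - B * A = c • B) (hker : LinearMap.ker B = ⊥) :
    Module.finrank ℂ V = 0 := by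
  have hinj : Function.Injective B := LinearMap.ker_eq_bot.mp hker
  have hbij : Function.Bijective B :=
    ⟨hinj, (LinearMap.injective_iff_surjective).mp hinj⟩
  set e := LinearEquiv.ofBijective B hbij with he
  set C : Module.End ℂ V := (e.symm : V →ₗ[ℂ] V) with hC
  have hBC : B * C = 1 := by
    ext v
    show B (e.symm v) = v
    exact e.apply_symm_apply v
  have hCB : C * B = 1 := by
    ext v
    show e.symm (B v) = v
    exact e.symm_apply_apply v
  have h2 := congrArg (fun f => LinearMap.trace ℂ V (f * C)) h
  simp only [sub_mul, smul_mul_assoc, map_sub, map_smul] at h2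
  have e1 : LinearMap.trace ℂ V (A * B * C) = LinearMap.trace ℂ V A := by
    rw [mul_assoc, hBC, mul_one]
  have e2 : LinearMap.trace ℂ V (B * A * C) = LinearMap.trace ℂ V A := by
    rw [mul_assoc, LinearMap.trace_mul_comm, mul_assoc, hCB, mul_one]
  rw [e1, e2, sub_self, hBC, LinearMap.trace_one] at h2
  have := h2.symm
  rw [smul_eq_mul, mul_eq_zero] at this
  rcases this with h' | h'
  · exact absurd h' hc
  · exact_mod_cast h'

lemma GRep.coeff_ne_zero (p : ℂ) (hp : p ≠ 0)
    (hpq : ∀ q : ℚ, 0 < q → (q : ℂ) ≠ p) (i m : ℕ) (hnz : ¬(i = 0 ∧ m = 0)) :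
    (i : ℂ) - p * m ≠ 0 := by
  intro h0
  rcases Nat.eq_zero_or_pos m with hm | hm
  · subst hm
    simp only [Nat.cast_zero, mul_zero, sub_zero, Nat.cast_eq_zero] at h0
    exact hnz ⟨h0, rfl⟩
  · rcases Nat.eq_zero_or_pos i with hi | hi
    · subst hi
      simp only [Nat.cast_zero, zero_sub, neg_eq_zero, mul_eq_zero] at h0
      rcases h0 with h0 | h0
      · exact hp h0
      · exact (Nat.cast_ne_zero (R := ℂ)).mpr hm.ne' h0
    · have hq : (0 : ℚ) < (i : ℚ) / (m : ℚ) := by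
        apply div_pos <;> exact_mod_cast ‹_›
      apply hpq _ hq
      have hmC : (m : ℂ) ≠ 0 := (Nat.cast_ne_zero (R := ℂ)).mpr hm.ne'
      rw [Rat.cast_div, Rat.cast_natCast, Rat.cast_natCast, div_eq_iff hmC]
      linear_combination h0

/-- All basis elements other than `J_{0,0}` act as zero on a finite-dimensional
irreducible module. -/
lemma GRep.vanish (p : ℂ) (hp : p ≠ 0)
    (hpq : ∀ q : ℚ, 0 < q → (q : ℂ) ≠ p) (k N : ℕ)
    {V : Type*} [AddCommGroup V] [Module ℂ V] [FiniteDimensional ℂ V]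
    (ρ : ℕ × ℕ → Module.End ℂ V) (hrep : IsGRep p k N ρ)
    (hirr : ∀ W : Submodule ℂ V,
      (∀ a : ℕ × ℕ, a.1 ≤ k → a.2 ≤ N → ∀ v ∈ W, ρ a v ∈ W) → W = ⊥ ∨ W = ⊤) :
    ∀ i m : ℕ, i ≤ k → m ≤ N → ¬(i = 0 ∧ m = 0) → ρ (i, m) = 0 := by
  have H : ∀ d : ℕ, ∀ i m : ℕ, i ≤ k → m ≤ N → k + N - (i + m) < d →
      ¬(i = 0 ∧ m = 0) → ρ (i, m) = 0 := by
    intro d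
    induction d with
    | zero => intro i m _ _ hd _; omega
    | succ d ih =>
      intro i m hik hmN hd hnz
      -- `ρ (i,m)` commutes with every `ρ (j,n)` with `(j,n) ≠ (0,0)`
      have hcomm : ∀ j n : ℕ, j ≤ k → n ≤ N → ¬(j = 0 ∧ n = 0) →
          ρ (j, n) * ρ (i, m) - ρ (i, m) * ρ (j, n) = 0 := by
        intro j n hjk hnN hjn0
        have := hrep (j, n) (i, m) hjk hnN hik hmN
        simp only at this
        rw [this]
        split_ifs with hin
        · have hz : ρ (j + i, n + m) = 0 := by
            apply ih (j + i) (n + m) hin.1 hin.2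
            · omega
            · omega
          rw [hz, smul_zero]
        · rfl
      -- the commutation relation with `ρ (0,0)`
      have hA : ρ (0, 0) * ρ (i, m) - ρ (i, m) * ρ (0, 0) =
          ((i : ℂ) - p * m) • ρ (i, m) := by
        have := hrep (0, 0) (i, m) (Nat.zero_le _) (Nat.zero_le _) hik hmN
        simp only [Nat.zero_add, Nat.cast_zero] at this
        rw [if_pos ⟨hik, hmN⟩] at this
        rw [this]
        congr 1
        ring
      have hc : (i : ℂ) - p * m ≠ 0 := GRep.coeff_ne_zero p hp hpq i m hnz
      by_contra hB0
      -- the kernel of `ρ (i,m)` is an invariant subspace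
      have hW : ∀ a : ℕ × ℕ, a.1 ≤ k → a.2 ≤ N →
          ∀ v ∈ LinearMap.ker (ρ (i, m)), ρ a v ∈ LinearMap.ker (ρ (i, m)) := by
        rintro ⟨j, n⟩ hjk hnN v hv
        rw [LinearMap.mem_ker] at hv ⊢
        by_cases hjn : j = 0 ∧ n = 0
        · obtain ⟨rfl, rfl⟩ := hjn
          have h1 := LinearMap.ext_iff.mp hA v
          simp only [LinearMap.sub_apply, Module.End.mul_apply, LinearMap.smul_apply,
            hv, map_zero, smul_zero, zero_sub, neg_eq_zero] at h1
          exact h1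
        · have h1 := LinearMap.ext_iff.mp (hcomm j n hjk hnN hjn) v
          simp only [LinearMap.sub_apply, Module.End.mul_apply, LinearMap.zero_apply,
            hv, map_zero, zero_sub, neg_eq_zero] at h1
          exact h1
      rcases hirr _ hW with hbot | htop
      · have h0 := GRep.finrank_eq_zero_of_comm_smul hc hA hbot
        have : Subsingleton V := Module.finrank_zero_iff.mp h0
        exact hB0 (Subsingleton.elim _ _)
      · exact hB0 (LinearMap.ker_eq_top.mp htop)
  intro i m hik hmN hnz
  exact H (k + N + 1) i m hik hmN (by omega) hnz

/-- Let `p ∈ ℂ` be nonzero with `p ∉ ℚ>0`, and let `V` be a nontrivial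
finite-dimensional irreducible module over `G_{k,N}`.  Then `dim V = 1`. -/
theorem dim_of_irreducible_G_module (p : ℂ) (hp : p ≠ 0)
    (hpq : ∀ q : ℚ, 0 < q → (q : ℂ) ≠ p) (k N : ℕ)
    {V : Type*} [AddCommGroup V] [Module ℂ V] [FiniteDimensional ℂ V]
    (ρ : ℕ × ℕ → Module.End ℂ V) (hrep : IsGRep p k N ρ)
    (hnontriv : ∃ a : ℕ × ℕ, a.1 ≤ k ∧ a.2 ≤ N ∧ ρ a ≠ 0)
    (hirr : ∀ W : Submodule ℂ V,
      (∀ a : ℕ × ℕ, a.1 ≤ k → a.2 ≤ N → ∀ v ∈ W, ρ a v ∈ W) → W = ⊥ ∨ W = ⊤) :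
    Module.finrank ℂ V = 1 := by
  have hvan := GRep.vanish p hp hpq k N ρ hrep hirr
  obtain ⟨a, hak, haN, ha0⟩ := hnontriv
  have haeq : a = (0, 0) := by
    by_contra h
    exact ha0 (by
      have : ¬(a.1 = 0 ∧ a.2 = 0) := by
        intro ⟨h1, h2⟩
        exact h (Prod.ext h1 h2)
      simpa using hvan a.1 a.2 hak haN this)
  subst haeq
  have hAne : ρ (0, 0) ≠ 0 := ha0
  have : Nontrivial V := by
    by_contra h
    rw [not_nontrivial_iff_subsingleton] at h
    exact hAne (Subsingleton.elim _ _)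
  obtain ⟨μ, hμ⟩ := Module.End.exists_eigenvalue (ρ (0, 0))
  -- the eigenspace is invariant, hence all of `V`
  have hEtop : Module.End.eigenspace (ρ (0, 0)) μ = ⊤ := by
    have hinv : ∀ a : ℕ × ℕ, a.1 ≤ k → a.2 ≤ N → ∀ v ∈ Module.End.eigenspace (ρ (0, 0)) μ,
        ρ a v ∈ Module.End.eigenspace (ρ (0, 0)) μ := by
      rintro ⟨j, n⟩ hjk hnN v hv
      by_cases hjn : j = 0 ∧ n = 0
      · obtain ⟨rfl, rfl⟩ := hjn
        rw [Module.End.mem_eigenspace_iff] at hv ⊢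
        rw [hv, map_smul, hv]
      · rw [hvan j n hjk hnN hjn]
        exact Submodule.zero_mem _
    rcases hirr _ hinv with hbot | htop
    · exact absurd hbot hμ
    · exact htop
  have hscal : ∀ v : V, ρ (0, 0) v = μ • v := by
    intro v
    have : v ∈ Module.End.eigenspace (ρ (0, 0)) μ := hEtop ▸ Submodule.mem_top
    exact Module.End.mem_eigenspace_iff.mp this
  obtain ⟨v, hv⟩ := exists_ne (0 : V)
  have hspan : (Submodule.span ℂ {v}) = ⊤ := by
    have hinv : ∀ a : ℕ × ℕ, a.1 ≤ k → a.2 ≤ N → ∀ w ∈ Submodule.span ℂ {v},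
        ρ a w ∈ Submodule.span ℂ {v} := by
      rintro ⟨j, n⟩ hjk hnN w hw
      by_cases hjn : j = 0 ∧ n = 0
      · obtain ⟨rfl, rfl⟩ := hjn
        rw [hscal w]
        exact Submodule.smul_mem _ _ hw
      · rw [hvan j n hjk hnN hjn]
        exact Submodule.zero_mem _
    rcases hirr _ hinv with hbot | htop
    · have hmem := Submodule.mem_span_singleton_self (R := ℂ) v
      rw [hbot, Submodule.mem_bot] at hmem
      exact absurd hmem hv
    · exact htop
  have hall : ∀ w : V, ∃ c : ℂ, c • v = w := by
    intro w
    have hw : w ∈ Submodule.span ℂ {v} := hspan ▸ Submodule.mem_top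
    exact Submodule.mem_span_singleton.mp hw
  exact finrank_eq_one v hv hall
end

section
/- For Δ, α, β ∈ ℂ, the free rank-one conformal module M_{Δ,α,β} = ℂ[∂]v over the Heisenberg–Virasoro conformal algebra b(1), defined by L λ v = (∂+Δλ+α)v and M λ v = βv (where L = -L̄_0, M = L̄_1), is irreducible as a conformal module if and only if Δ ≠ 0 or β ≠ 0. Moreover when Δ = β = 0, the submodule (∂+α)M_{0,α,0} is the unique nontrivial proper conformal submodule, and it is isomorphic to M_{1,α,0}. -/
open Polynomial

/-- `g(∂+λ)` : the image of `g ∈ ℂ[∂]` in `ℂ[∂][λ]` under `∂ ↦ ∂ + λ`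
(inner variable `∂`, outer variable `λ`). -/
noncomputable def shiftD (g : Polynomial ℂ) : Polynomial (Polynomial ℂ) :=
  Polynomial.eval₂ (Polynomial.C.comp Polynomial.C) (Polynomial.C Polynomial.X + Polynomial.X) g

/-- The λ-action of `L` on `M_{Δ,α,β} = ℂ[∂]v`:  `L λ (g(∂)v) = g(∂+λ)(∂+Δλ+α) v`. -/
noncomputable def Lact (Δ α : ℂ) (g : Polynomial ℂ) : Polynomial (Polynomial ℂ) :=
  shiftD g * (Polynomial.C Polynomial.X + Polynomial.C (Polynomial.C Δ) * Polynomial.X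
    + Polynomial.C (Polynomial.C α))

/-- The λ-action of `M` on `M_{Δ,α,β}`:  `M λ (g(∂)v) = β g(∂+λ) v`. -/
noncomputable def Mact (β : ℂ) (g : Polynomial ℂ) : Polynomial (Polynomial ℂ) :=
  Polynomial.C (Polynomial.C β) * shiftD g

/-- A conformal submodule of `M_{Δ,α,β}`: a `ℂ[∂]`-submodule of `ℂ[∂]v ≅ ℂ[∂]` closed
under all coefficients of the λ-actions of `L` and `M`. -/
def ConfSub (Δ α β : ℂ) (W : Submodule (Polynomial ℂ) (Polynomial ℂ)) : Prop :=
  ∀ g ∈ W, ∀ n : ℕ, (Lact Δ α g).coeff n ∈ W ∧ (Mact β g).coeff n ∈ W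


lemma shiftD_coeff (g : Polynomial ℂ) (n : ℕ) :
    (shiftD g).coeff n = ∑ i ∈ Finset.range (g.natDegree + 1),
      Polynomial.C (g.coeff i) * (X ^ (i - n) * (i.choose n : Polynomial ℂ)) := by
  rw [shiftD, Polynomial.eval₂_eq_sum_range, Polynomial.finset_sum_coeff]
  refine Finset.sum_congr rfl fun i _ => ?_
  rw [RingHom.comp_apply, add_comm (Polynomial.C X) X, coeff_C_mul, coeff_X_add_C_pow]

lemma shiftD_coeff_natDegree (g : Polynomial ℂ) :
    (shiftD g).coeff g.natDegree = Polynomial.C g.leadingCoeff := by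
  rw [shiftD_coeff]
  rw [Finset.sum_eq_single g.natDegree]
  · rw [Nat.sub_self, pow_zero, Nat.choose_self, Nat.cast_one, one_mul, mul_one,
      Polynomial.leadingCoeff]
  · intro i hi hne
    have : i < g.natDegree := lt_of_le_of_ne (Nat.lt_succ_iff.mp (Finset.mem_range.mp hi)) hne
    simp [Nat.choose_eq_zero_of_lt this]
  · intro h; exact absurd (Finset.self_mem_range_succ _) h

lemma shiftD_coeff_of_gt (g : Polynomial ℂ) {n : ℕ} (h : g.natDegree < n) :
    (shiftD g).coeff n = 0 := by
  rw [shiftD_coeff]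
  refine Finset.sum_eq_zero fun i hi => ?_
  have : i < n := lt_of_lt_of_le (Finset.mem_range.mp hi) h
  simp [Nat.choose_eq_zero_of_lt this]

lemma const_mem_top {W : Submodule (Polynomial ℂ) (Polynomial ℂ)} {c : ℂ} (hc : c ≠ 0)
    (h : Polynomial.C c ∈ W) : W = ⊤ :=
  Ideal.eq_top_of_isUnit_mem W h (Polynomial.isUnit_C.mpr (isUnit_iff_ne_zero.mpr hc))

lemma irred_of (Δ α β : ℂ) (h : Δ ≠ 0 ∨ β ≠ 0)
    (W : Submodule (Polynomial ℂ) (Polynomial ℂ)) (hW : ConfSub Δ α β W) :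
    W = ⊥ ∨ W = ⊤ := by
  by_cases hb : W = ⊥
  · exact Or.inl hb
  right
  obtain ⟨g, hgW, hg0⟩ := Submodule.exists_mem_ne_zero_of_ne_bot hb
  have hlead : g.leadingCoeff ≠ 0 := Polynomial.leadingCoeff_ne_zero.mpr hg0
  rcases h with hΔ | hβ
  · -- use Lact coefficient at natDegree+1
    have hmem := (hW g hgW (g.natDegree + 1)).1
    have hcalc : (Lact Δ α g).coeff (g.natDegree + 1) = Polynomial.C (g.leadingCoeff * Δ) := by
      have : Lact Δ α g = shiftD g * Polynomial.C (X + Polynomial.C α)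
          + shiftD g * Polynomial.C (Polynomial.C Δ) * X := by
        rw [Lact]; push_cast [map_add]; ring
      rw [this, Polynomial.coeff_add, coeff_mul_C, shiftD_coeff_of_gt g (Nat.lt_succ_self _),
        coeff_mul_X, coeff_mul_C, shiftD_coeff_natDegree, zero_mul, zero_add, ← map_mul]
    rw [hcalc] at hmem
    exact const_mem_top (mul_ne_zero hlead hΔ) hmem
  · have hmem := (hW g hgW g.natDegree).2
    have hcalc : (Mact β g).coeff g.natDegree = Polynomial.C (β * g.leadingCoeff) := by
      rw [Mact, coeff_C_mul, shiftD_coeff_natDegree, ← map_mul]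
    rw [hcalc] at hmem
    exact const_mem_top (mul_ne_zero hβ hlead) hmem

lemma Lact_zero (α : ℂ) (g : Polynomial ℂ) :
    Lact 0 α g = shiftD g * Polynomial.C (X + Polynomial.C α) := by
  rw [Lact]; simp only [map_add, map_zero, zero_mul, add_zero]

lemma confSub_span (α : ℂ) : ConfSub 0 α 0 (Ideal.span {X + Polynomial.C α}) := by
  intro g _ n
  constructor
  · rw [Lact_zero, coeff_mul_C]
    exact Ideal.mem_span_singleton.mpr (dvd_mul_left _ _)
  · simp [Mact]

lemma span_ne_bot (α : ℂ) : Ideal.span {X + Polynomial.C α} ≠ (⊥ : Ideal (Polynomial ℂ)) := by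
  rw [Ne, Ideal.span_singleton_eq_bot]
  exact Polynomial.X_add_C_ne_zero α  -- may not exist; check

lemma irr_XC (α : ℂ) : Irreducible (X + Polynomial.C α) := by
  have : X + Polynomial.C α = X - Polynomial.C (-α) := by ring_nf; rw [map_neg]; ring
  rw [this]; exact Polynomial.irreducible_X_sub_C (-α)

lemma span_ne_top (α : ℂ) : Ideal.span {X + Polynomial.C α} ≠ (⊤ : Ideal (Polynomial ℂ)) :=
  (PrincipalIdealRing.isMaximal_of_irreducible (irr_XC α)).ne_top

lemma uniq_span (α : ℂ) (W : Submodule (Polynomial ℂ) (Polynomial ℂ))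
    (hW : ConfSub 0 α 0 W) (h1 : W ≠ ⊥) (h2 : W ≠ ⊤) :
    W = Ideal.span {X + Polynomial.C α} := by
  obtain ⟨g, hgW, hg0⟩ := Submodule.exists_mem_ne_zero_of_ne_bot h1
  have hlead : g.leadingCoeff ≠ 0 := Polynomial.leadingCoeff_ne_zero.mpr hg0
  have hmem := (hW g hgW g.natDegree).1
  have hcalc : (Lact 0 α g).coeff g.natDegree
      = Polynomial.C g.leadingCoeff * (X + Polynomial.C α) := by
    rw [Lact_zero, coeff_mul_C, shiftD_coeff_natDegree]
  rw [hcalc] at hmem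
  have hXC : X + Polynomial.C α ∈ W := by
    have := W.smul_mem (Polynomial.C g.leadingCoeff⁻¹) hmem
    rwa [smul_eq_mul, ← mul_assoc, ← map_mul, inv_mul_cancel₀ hlead, map_one, one_mul] at this
  have hle : Ideal.span {X + Polynomial.C α} ≤ W := by
    rw [Ideal.span_singleton_le_iff_mem]; exact hXC
  exact ((PrincipalIdealRing.isMaximal_of_irreducible (irr_XC α)).eq_of_le h2 hle).symm

/-- The conformal `b(1)`-module `M_{Δ,α,β} = ℂ[∂]v` (with `L λ v = (∂+Δλ+α)v`,
`M λ v = βv`) is irreducible iff `Δ ≠ 0` or `β ≠ 0`.  Moreover, when `Δ = β = 0`,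
`(∂+α)M_{0,α,0}` is the unique nontrivial proper conformal submodule, and it is
isomorphic to `M_{1,α,0}` (via a `ℂ[∂]`-linear isomorphism onto it intertwining the
λ-actions). -/
theorem b1_rank_one_irreducibility (Δ α β : ℂ) :
    ((∀ W : Submodule (Polynomial ℂ) (Polynomial ℂ), ConfSub Δ α β W → W = ⊥ ∨ W = ⊤)
      ↔ (Δ ≠ 0 ∨ β ≠ 0)) ∧
    (Δ = 0 → β = 0 →
      (ConfSub Δ α β (Ideal.span {Polynomial.X + Polynomial.C α}) ∧
       Ideal.span {Polynomial.X + Polynomial.C α} ≠ (⊥ : Ideal (Polynomial ℂ)) ∧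
       Ideal.span {Polynomial.X + Polynomial.C α} ≠ (⊤ : Ideal (Polynomial ℂ)) ∧
       (∀ W : Submodule (Polynomial ℂ) (Polynomial ℂ), ConfSub Δ α β W →
          W ≠ ⊥ → W ≠ ⊤ → W = Ideal.span {Polynomial.X + Polynomial.C α})) ∧
      ∃ φ : Polynomial ℂ →ₗ[Polynomial ℂ] Polynomial ℂ,
        Function.Injective φ ∧
        LinearMap.range φ = Ideal.span {Polynomial.X + Polynomial.C α} ∧
        (∀ (g : Polynomial ℂ) (n : ℕ),
          φ ((Lact 1 α g).coeff n) = (Lact Δ α (φ g)).coeff n) ∧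
        (∀ (g : Polynomial ℂ) (n : ℕ),
          φ ((Mact 0 g).coeff n) = (Mact β (φ g)).coeff n)) := by
  constructor
  · constructor
    · intro h
      by_contra hc
      push_neg at hc
      obtain ⟨hΔ, hβ⟩ := hc
      subst hΔ; subst hβ
      rcases h _ (confSub_span α) with hb | ht
      · exact span_ne_bot α hb
      · exact span_ne_top α ht
    · exact fun h W hW => irred_of Δ α β h W hW
  · intro hΔ hβ
    subst hΔ; subst hβ
    refine ⟨⟨confSub_span α, span_ne_bot α, span_ne_top α, uniq_span α⟩, ?_⟩
    refine ⟨LinearMap.toSpanSingleton (Polynomial ℂ) (Polynomial ℂ) (X + Polynomial.C α),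
      ?_, ?_, ?_, ?_⟩
    · intro a b hab
      simp only [LinearMap.toSpanSingleton_apply, smul_eq_mul] at hab
      exact mul_right_cancel₀ (irr_XC α).ne_zero hab
    · rw [← LinearMap.span_singleton_eq_range, Ideal.submodule_span_eq]
    · intro g n
      simp only [LinearMap.toSpanSingleton_apply, smul_eq_mul]
      have key : Lact 1 α g * Polynomial.C (X + Polynomial.C α)
          = Lact 0 α (g * (X + Polynomial.C α)) := by
        rw [Lact_zero, Lact, shiftD, shiftD, Polynomial.eval₂_mul]
        have : Polynomial.eval₂ (Polynomial.C.comp Polynomial.C)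
            (Polynomial.C Polynomial.X + Polynomial.X) (X + Polynomial.C α)
            = Polynomial.C Polynomial.X + Polynomial.X
              + Polynomial.C (Polynomial.C α) := by
          simp [Polynomial.eval₂_add]
        rw [this]
        simp only [map_add, map_one]; ring
      rw [← key, coeff_mul_C]
    · intro g n
      simp [Mact, LinearMap.toSpanSingleton_apply]
end
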